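/- Let R be a commutative ring, let q ∈ R, and let i ≥ 0. Then in the formal power series ring R[[t]] the following identity holds: (Σ_{n=0}^{∞} e_i(1, q, q², …, q^{n−1}) tⁿ) · ∏_{j=0}^{i} (1 − q^j t) = q^{i(i−1)/2} t^i, where e_i(1, q, …, q^{n−1}) denotes the i-th elementary symmetric polynomial evaluated at the n values q⁰, q¹, …, q^{n−1} (interpreted as 0 when n < i, and as 1 when i = 0). Equivalently, Σ_{n≥0} e_i(1, q, …, q^{n−1}) tⁿ = q^{i(i−1)/2} t^i / ∏_{j=0}^{i} (1 − q^j t), so this generating function is rational with (simple) poles exactly at t = q^{−j} for j = 0, 1, …, i when q is an appropriate nonzero scalar. -/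

import Mathlib

lemma esymm_cons {R : Type} [CommRing R] (a : R) (s : Multiset R) (k : ℕ) :
    (a ::ₘ s).esymm (k + 1) = s.esymm (k + 1) + a * s.esymm k := by
  simp [Multiset.esymm, Multiset.powersetCard_cons, Multiset.map_map, Function.comp_def,
    Multiset.sum_map_mul_left]

lemma esymm_map_mul {R : Type} [CommRing R] (a : R) (s : Multiset R) (k : ℕ) :
    (s.map (a * ·)).esymm k = a ^ k * s.esymm k := by
  simpa [smul_eq_mul] using (Multiset.pow_smul_esymm a k s).symm

lemma key {R : Type} [CommRing R] (q : R) (i n : ℕ) :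
    ((Multiset.range (n + 1)).map (fun j => q ^ j)).esymm (i + 1) =
      q ^ (i + 1) * ((Multiset.range n).map (fun j => q ^ j)).esymm (i + 1) +
      q ^ i * ((Multiset.range n).map (fun j => q ^ j)).esymm i := by
  have h : (Multiset.range (n + 1)).map (fun j => q ^ j) =
      1 ::ₘ ((Multiset.range n).map (fun j => q ^ j)).map (q * ·) := by
    show ((List.range (n + 1)).map (fun j => q ^ j) : Multiset R) = _
    rw [List.range_succ_eq_map]
    simp [Multiset.map_map, Function.comp_def, pow_succ, mul_comm]
    rfl
  rw [h, esymm_cons, esymm_map_mul, esymm_map_mul, one_mul, add_comm]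

open PowerSeries

lemma esymm_zero' {R : Type} [CommRing R] (s : Multiset R) : s.esymm 0 = 1 := by
  simp [Multiset.esymm, Multiset.powersetCard_zero_left]

lemma esymm_nil {R : Type} [CommRing R] (k : ℕ) : (0 : Multiset R).esymm (k + 1) = 0 := by
  simp [Multiset.esymm, Multiset.powersetCard_zero_right]

lemma step {R : Type} [CommRing R] (q : R) (i : ℕ) :
    (PowerSeries.mk fun n => ((Multiset.range n).map (fun j => q ^ j)).esymm (i + 1)) *
      (1 - C (q ^ (i + 1)) * X) =
    C (q ^ i) * X *
      (PowerSeries.mk fun n => ((Multiset.range n).map (fun j => q ^ j)).esymm i) := by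
  ext n
  cases n with
  | zero => simp [esymm_nil]
  | succ n =>
    rw [mul_one_sub, mul_left_comm, mul_assoc (C (q ^ i)) X, mul_comm X]
    simp only [map_sub, coeff_succ_mul_X, coeff_mk, map_mul, coeff_C_mul, key]
    ring

lemma base {R : Type} [CommRing R] (q : R) :
    (PowerSeries.mk fun n => ((Multiset.range n).map (fun j => q ^ j)).esymm 0) *
      (1 - C 1 * X) = 1 := by
  ext n
  cases n with
  | zero => simp [esymm_zero']
  | succ n =>
    simp [mul_one_sub, ← mul_assoc, coeff_succ_mul_X, esymm_zero']



/-- the generating function of `e_i(1, q, …, q^{n-1})` satisfies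
`(∑ₙ e_i(1,…,q^{n-1}) tⁿ) · ∏_{j=0}^{i} (1 − qʲ t) = q^{i(i−1)/2} tⁱ` in `R⟦t⟧`. -/
theorem stmt_10 (R : Type) [CommRing R] (q : R) (i : ℕ) :
    (PowerSeries.mk fun n => ((Multiset.range n).map (fun j => q ^ j)).esymm i) *
      ∏ j ∈ Finset.range (i + 1), (1 - PowerSeries.C (q ^ j) * PowerSeries.X) =
    PowerSeries.C (q ^ (i * (i - 1) / 2)) * PowerSeries.X ^ i := by

  induction i with
  | zero => simpa using base q
  | succ i ih =>
    rw [Finset.prod_range_succ, ← mul_assoc, mul_comm _ (1 - C (q ^ (i+1)) * X),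
      ← mul_assoc, mul_comm _ (PowerSeries.mk _), step, mul_assoc, ih]
    have hn : (i + 1) * (i + 1 - 1) / 2 = i * (i - 1) / 2 + i := by
      have h1 : (i + 1) * (i + 1 - 1) = i * (i - 1) + 2 * i := by
        cases i with
        | zero => rfl
        | succ k => simp [Nat.succ_sub_one]; ring
      rw [h1, Nat.add_mul_div_left _ _ (by norm_num : 0 < 2)]
    rw [hn, pow_add, map_mul]
    ring
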